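/- Let K = {θ ∈ R^d : Aθ ≤ b} and for θ ∈ Int(K) let Φ(θ) = α⁻¹ Σ_{i=1}^m aᵢaᵢᵀ/(aᵢᵀθ − bᵢ)² + η⁻¹ I_d. If u, v ∈ Int(K) satisfy ‖u−v‖_{Φ(u)} ≤ 1/(2√α), where ‖w‖_{Φ(u)} = √(wᵀΦ(u)w), then (1 − √α‖u−v‖_{Φ(u)})² Φ(v) ⪯ Φ(u) ⪯ (1 + √α‖u−v‖_{Φ(u)})² Φ(v), where ⪯ denotes the Loewner order on symmetric matrices. -/

import Mathlib

open Matrix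

/-- The regularized log-barrier Hessian Φ(θ) = α⁻¹ Σᵢ aᵢaᵢᵀ/(aᵢᵀθ − bᵢ)² + η⁻¹ I. -/
noncomputable def softPhi {m d : ℕ} (A : Matrix (Fin m) (Fin d) ℝ) (b : Fin m → ℝ)
    (α η : ℝ) (θ : Fin d → ℝ) : Matrix (Fin d) (Fin d) ℝ :=
  α⁻¹ • ∑ i, ((A.mulVec θ i - b i) ^ 2)⁻¹ • vecMulVec (A i) (A i) +
    η⁻¹ • (1 : Matrix (Fin d) (Fin d) ℝ)

/-- The local norm ‖w‖_M = √(wᵀ M w). -/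
noncomputable def locNorm {d : ℕ} (M : Matrix (Fin d) (Fin d) ℝ) (w : Fin d → ℝ) : ℝ :=
  Real.sqrt (w ⬝ᵥ M.mulVec w)

lemma sumQuad {m d : ℕ} (M : Fin m → Matrix (Fin d) (Fin d) ℝ) (x : Fin d → ℝ) :
    x ⬝ᵥ (∑ i, M i) *ᵥ x = ∑ i, x ⬝ᵥ (M i) *ᵥ x := by
  simp only [mulVec, dotProduct, Matrix.sum_apply, Finset.mul_sum, Finset.sum_mul]
  rw [show (∑ j : Fin d, ∑ k : Fin d, ∑ i : Fin m, x j * (M i j k * x k))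
      = ∑ j : Fin d, ∑ i : Fin m, ∑ k : Fin d, x j * (M i j k * x k) from
    Finset.sum_congr rfl fun _ _ => Finset.sum_comm, Finset.sum_comm]

lemma vmvQuad {d : ℕ} (a x : Fin d → ℝ) : x ⬝ᵥ (vecMulVec a a) *ᵥ x = (a ⬝ᵥ x) ^ 2 := by
  simp only [mulVec, dotProduct, vecMulVec_apply, Finset.mul_sum, Finset.sum_mul, sq]
  exact Finset.sum_congr rfl fun i _ => Finset.sum_congr rfl fun j _ => by ring

lemma quadPhi {m d : ℕ} (A : Matrix (Fin m) (Fin d) ℝ) (b : Fin m → ℝ)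
    (α η : ℝ) (θ x : Fin d → ℝ) :
    x ⬝ᵥ (softPhi A b α η θ).mulVec x =
    α⁻¹ * ∑ i, ((A.mulVec θ i - b i) ^ 2)⁻¹ * (A.mulVec x i) ^ 2 + η⁻¹ * (x ⬝ᵥ x) := by
  simp only [softPhi, Matrix.add_mulVec, Matrix.smul_mulVec, dotProduct_add,
    dotProduct_smul, Matrix.one_mulVec, smul_eq_mul]
  congr 1
  congr 1
  rw [sumQuad]
  refine Finset.sum_congr rfl fun i _ => ?_
  rw [Matrix.smul_mulVec, dotProduct_smul, smul_eq_mul, vmvQuad]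
  rfl

lemma hermPhi {m d : ℕ} (A : Matrix (Fin m) (Fin d) ℝ) (b : Fin m → ℝ)
    (α η : ℝ) (θ : Fin d → ℝ) : (softPhi A b α η θ).IsHermitian := by
  unfold Matrix.IsHermitian softPhi
  ext i j
  simp [Matrix.conjTranspose_apply, Matrix.add_apply, Matrix.smul_apply, Matrix.sum_apply,
    Matrix.vecMulVec_apply, Matrix.one_apply, mul_comm, eq_comm]

lemma hermSmul {d : ℕ} (c : ℝ) {M : Matrix (Fin d) (Fin d) ℝ} (h : M.IsHermitian) :
    (c • M).IsHermitian := by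
  unfold Matrix.IsHermitian at *
  rw [Matrix.conjTranspose_smul, h, star_trivial]

set_option maxHeartbeats 2000000 in
theorem stmt2 (d m : ℕ) (A : Matrix (Fin m) (Fin d) ℝ) (b : Fin m → ℝ) (α η : ℝ)
    (hα : 0 < α) (hη : 0 < η)
    (u v : Fin d → ℝ)
    (hu : ∀ i, A.mulVec u i < b i) (hv : ∀ i, A.mulVec v i < b i)
    (hclose : locNorm (softPhi A b α η u) (u - v) ≤ 1 / (2 * Real.sqrt α)) :
    ((softPhi A b α η u) -
      (1 - Real.sqrt α * locNorm (softPhi A b α η u) (u - v)) ^ 2 •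
        (softPhi A b α η v)).PosSemidef ∧
    ((1 + Real.sqrt α * locNorm (softPhi A b α η u) (u - v)) ^ 2 •
        (softPhi A b α η v) - (softPhi A b α η u)).PosSemidef := by
  set t := locNorm (softPhi A b α η u) (u - v) with ht
  set ε := Real.sqrt α * t with hε
  have hsqα : (0:ℝ) < Real.sqrt α := Real.sqrt_pos.2 hα
  -- quadratic form at u-v is nonneg
  have hQ : 0 ≤ (u - v) ⬝ᵥ (softPhi A b α η u).mulVec (u - v) := by
    rw [quadPhi]
    have h1 : 0 ≤ ∑ i, ((A.mulVec u i - b i) ^ 2)⁻¹ * (A.mulVec (u - v) i) ^ 2 :=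
      Finset.sum_nonneg fun i _ => by positivity
    have h2 : 0 ≤ (u - v) ⬝ᵥ (u - v) := Finset.sum_nonneg fun i _ => mul_self_nonneg _
    positivity
  have ht0 : 0 ≤ t := Real.sqrt_nonneg _
  have htsq : t ^ 2 = (u - v) ⬝ᵥ (softPhi A b α η u).mulVec (u - v) := by
    rw [ht, locNorm, Real.sq_sqrt hQ]
  have hε0 : 0 ≤ ε := mul_nonneg hsqα.le ht0
  have hεhalf : ε ≤ 1 / 2 := by
    have := mul_le_mul_of_nonneg_left hclose hsqα.le
    calc ε ≤ Real.sqrt α * (1 / (2 * Real.sqrt α)) := this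
    _ = 1 / 2 := by field_simp
  have hεsq : ε ^ 2 = α * t ^ 2 := by
    rw [hε, mul_pow, Real.sq_sqrt hα.le]
  -- per-constraint slack bounds
  have key : ∀ i, (A.mulVec (u - v) i) ^ 2 ≤ ε ^ 2 * (A.mulVec u i - b i) ^ 2 := by
    intro i
    have hsu : (0:ℝ) < (A.mulVec u i - b i) ^ 2 := by
      rw [sq]; exact mul_pos_of_neg_of_neg (sub_neg.2 (hu i)) (sub_neg.2 (hu i))
    have hterm : ((A.mulVec u i - b i) ^ 2)⁻¹ * (A.mulVec (u - v) i) ^ 2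
        ≤ ∑ j, ((A.mulVec u j - b j) ^ 2)⁻¹ * (A.mulVec (u - v) j) ^ 2 :=
      Finset.single_le_sum (f := fun j => ((A.mulVec u j - b j) ^ 2)⁻¹ * (A.mulVec (u - v) j) ^ 2)
        (fun j _ => by positivity) (Finset.mem_univ i)
    have hsum : α⁻¹ * (((A.mulVec u i - b i) ^ 2)⁻¹ * (A.mulVec (u - v) i) ^ 2) ≤ t ^ 2 := by
      rw [htsq, quadPhi]
      have h2 : 0 ≤ η⁻¹ * ((u - v) ⬝ᵥ (u - v)) := by
        have : 0 ≤ (u - v) ⬝ᵥ (u - v) := Finset.sum_nonneg fun i _ => mul_self_nonneg _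
        positivity
      have := mul_le_mul_of_nonneg_left hterm (inv_nonneg.2 hα.le)
      linarith
    have : ((A.mulVec u i - b i) ^ 2)⁻¹ * (A.mulVec (u - v) i) ^ 2 ≤ α * t ^ 2 := by
      have := mul_le_mul_of_nonneg_left hsum hα.le
      rwa [← mul_assoc, mul_inv_cancel₀ hα.ne', one_mul] at this
    rw [← hεsq] at this
    calc (A.mulVec (u - v) i) ^ 2
        = ((A.mulVec u i - b i) ^ 2)⁻¹ * (A.mulVec (u - v) i) ^ 2 * (A.mulVec u i - b i) ^ 2 := by
          have hne : A.mulVec u i - b i ≠ 0 := (sub_neg.2 (hu i)).ne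
          field_simp
      _ ≤ ε ^ 2 * (A.mulVec u i - b i) ^ 2 := by
          exact mul_le_mul_of_nonneg_right this hsu.le
  -- squared slack comparisons
  have hsub : ∀ i, A.mulVec (u - v) i = (A.mulVec u i - b i) - (A.mulVec v i - b i) := by
    intro i; rw [Matrix.mulVec_sub]; simp
  have habs : ∀ i, |(A.mulVec u i - b i) - (A.mulVec v i - b i)|
      ≤ ε * -(A.mulVec u i - b i) := by
    intro i
    have hk := key i
    rw [hsub i] at hk
    have h1 := Real.sqrt_le_sqrt hk
    rw [Real.sqrt_sq_eq_abs] at h1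
    have h2 : Real.sqrt (ε ^ 2 * (A.mulVec u i - b i) ^ 2) = ε * -(A.mulVec u i - b i) := by
      rw [show ε ^ 2 * (A.mulVec u i - b i) ^ 2 = (ε * -(A.mulVec u i - b i)) ^ 2 by ring]
      exact Real.sqrt_sq (mul_nonneg hε0 (by linarith [hu i]))
    rw [h2] at h1
    exact h1
  have lower : ∀ i, (1 - ε) ^ 2 * (A.mulVec u i - b i) ^ 2 ≤ (A.mulVec v i - b i) ^ 2 := by
    intro i
    obtain ⟨hL, hR⟩ := abs_le.1 (habs i)
    have hsu : A.mulVec u i - b i < 0 := sub_neg.2 (hu i)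
    have hsv : A.mulVec v i - b i < 0 := sub_neg.2 (hv i)
    have h1ε : (0:ℝ) ≤ 1 - ε := by linarith
    have hle : A.mulVec v i - b i ≤ (1 - ε) * (A.mulVec u i - b i) := by nlinarith
    have hpos : 0 ≤ (1 - ε) * -(A.mulVec u i - b i) := mul_nonneg h1ε (by linarith)
    have hfac1 : 0 ≤ (1 - ε) * (A.mulVec u i - b i) - (A.mulVec v i - b i) := by linarith
    have hfac2 : 0 ≤ -((1 - ε) * (A.mulVec u i - b i)) - (A.mulVec v i - b i) := by nlinarith
    nlinarith [mul_nonneg hfac1 hfac2]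
  have upper : ∀ i, (A.mulVec v i - b i) ^ 2 ≤ (1 + ε) ^ 2 * (A.mulVec u i - b i) ^ 2 := by
    intro i
    obtain ⟨hL, hR⟩ := abs_le.1 (habs i)
    have hsu : A.mulVec u i - b i < 0 := sub_neg.2 (hu i)
    have hsv : A.mulVec v i - b i < 0 := sub_neg.2 (hv i)
    have hge : (1 + ε) * (A.mulVec u i - b i) ≤ A.mulVec v i - b i := by nlinarith
    have hfac1 : 0 ≤ (A.mulVec v i - b i) - (1 + ε) * (A.mulVec u i - b i) := by linarith
    have hfac2 : 0 ≤ -((1 + ε) * (A.mulVec u i - b i)) - (A.mulVec v i - b i) := by nlinarith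
    nlinarith [mul_nonneg hfac1 hfac2]
  constructor
  · refine posSemidef_iff_dotProduct_mulVec.2 ⟨(hermPhi A b α η u).sub (hermSmul _ (hermPhi A b α η v)), fun x => ?_⟩
    rw [star_trivial, Matrix.sub_mulVec, dotProduct_sub, Matrix.smul_mulVec,
      dotProduct_smul, smul_eq_mul, sub_nonneg, quadPhi, quadPhi]
    have hxx : 0 ≤ x ⬝ᵥ x := Finset.sum_nonneg fun i _ => mul_self_nonneg _
    have h1 : (1 - ε) ^ 2 * ∑ i, ((A.mulVec v i - b i) ^ 2)⁻¹ * (A.mulVec x i) ^ 2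
        ≤ ∑ i, ((A.mulVec u i - b i) ^ 2)⁻¹ * (A.mulVec x i) ^ 2 := by
      rw [Finset.mul_sum]
      refine Finset.sum_le_sum fun i _ => ?_
      have hsu : (0:ℝ) < (A.mulVec u i - b i) ^ 2 := by
        rw [sq]; exact mul_pos_of_neg_of_neg (sub_neg.2 (hu i)) (sub_neg.2 (hu i))
      have hsv : (0:ℝ) < (A.mulVec v i - b i) ^ 2 := by
        rw [sq]; exact mul_pos_of_neg_of_neg (sub_neg.2 (hv i)) (sub_neg.2 (hv i))
      have hfrac : (1 - ε) ^ 2 * ((A.mulVec v i - b i) ^ 2)⁻¹ ≤ ((A.mulVec u i - b i) ^ 2)⁻¹ := by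
        rw [← div_eq_mul_inv, inv_eq_one_div, div_le_div_iff₀ hsv hsu]
        linarith [lower i]
      calc (1 - ε) ^ 2 * (((A.mulVec v i - b i) ^ 2)⁻¹ * (A.mulVec x i) ^ 2)
          = ((1 - ε) ^ 2 * ((A.mulVec v i - b i) ^ 2)⁻¹) * (A.mulVec x i) ^ 2 := by ring
        _ ≤ ((A.mulVec u i - b i) ^ 2)⁻¹ * (A.mulVec x i) ^ 2 :=
            mul_le_mul_of_nonneg_right hfrac (sq_nonneg _)
    have h2 : (1 - ε) ^ 2 * (x ⬝ᵥ x) ≤ x ⬝ᵥ x :=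
      mul_le_of_le_one_left hxx (by nlinarith)
    have ha1 : α⁻¹ * ((1 - ε) ^ 2 * ∑ i, ((A.mulVec v i - b i) ^ 2)⁻¹ * (A.mulVec x i) ^ 2)
        ≤ α⁻¹ * ∑ i, ((A.mulVec u i - b i) ^ 2)⁻¹ * (A.mulVec x i) ^ 2 :=
      mul_le_mul_of_nonneg_left h1 (inv_nonneg.2 hα.le)
    have ha2 : η⁻¹ * ((1 - ε) ^ 2 * (x ⬝ᵥ x)) ≤ η⁻¹ * (x ⬝ᵥ x) :=
      mul_le_mul_of_nonneg_left h2 (inv_nonneg.2 hη.le)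
    calc (1 - ε) ^ 2 * (α⁻¹ * (∑ i, ((A.mulVec v i - b i) ^ 2)⁻¹ * (A.mulVec x i) ^ 2)
          + η⁻¹ * (x ⬝ᵥ x))
        = α⁻¹ * ((1 - ε) ^ 2 * ∑ i, ((A.mulVec v i - b i) ^ 2)⁻¹ * (A.mulVec x i) ^ 2)
          + η⁻¹ * ((1 - ε) ^ 2 * (x ⬝ᵥ x)) := by ring
      _ ≤ _ := add_le_add ha1 ha2
  · refine posSemidef_iff_dotProduct_mulVec.2 ⟨(hermSmul _ (hermPhi A b α η v)).sub (hermPhi A b α η u), fun x => ?_⟩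
    rw [star_trivial, Matrix.sub_mulVec, dotProduct_sub, Matrix.smul_mulVec,
      dotProduct_smul, smul_eq_mul, sub_nonneg, quadPhi, quadPhi]
    have hxx : 0 ≤ x ⬝ᵥ x := Finset.sum_nonneg fun i _ => mul_self_nonneg _
    have h1 : ∑ i, ((A.mulVec u i - b i) ^ 2)⁻¹ * (A.mulVec x i) ^ 2
        ≤ (1 + ε) ^ 2 * ∑ i, ((A.mulVec v i - b i) ^ 2)⁻¹ * (A.mulVec x i) ^ 2 := by
      rw [Finset.mul_sum]
      refine Finset.sum_le_sum fun i _ => ?_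
      have hsu : (0:ℝ) < (A.mulVec u i - b i) ^ 2 := by
        rw [sq]; exact mul_pos_of_neg_of_neg (sub_neg.2 (hu i)) (sub_neg.2 (hu i))
      have hsv : (0:ℝ) < (A.mulVec v i - b i) ^ 2 := by
        rw [sq]; exact mul_pos_of_neg_of_neg (sub_neg.2 (hv i)) (sub_neg.2 (hv i))
      have hfrac : ((A.mulVec u i - b i) ^ 2)⁻¹ ≤ (1 + ε) ^ 2 * ((A.mulVec v i - b i) ^ 2)⁻¹ := by
        rw [← div_eq_mul_inv, inv_eq_one_div, div_le_div_iff₀ hsu hsv]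
        linarith [upper i]
      calc ((A.mulVec u i - b i) ^ 2)⁻¹ * (A.mulVec x i) ^ 2
          ≤ ((1 + ε) ^ 2 * ((A.mulVec v i - b i) ^ 2)⁻¹) * (A.mulVec x i) ^ 2 :=
            mul_le_mul_of_nonneg_right hfrac (sq_nonneg _)
        _ = (1 + ε) ^ 2 * (((A.mulVec v i - b i) ^ 2)⁻¹ * (A.mulVec x i) ^ 2) := by ring
    have h2 : x ⬝ᵥ x ≤ (1 + ε) ^ 2 * (x ⬝ᵥ x) :=
      le_mul_of_one_le_left hxx (by nlinarith)
    have ha1 : α⁻¹ * ∑ i, ((A.mulVec u i - b i) ^ 2)⁻¹ * (A.mulVec x i) ^ 2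
        ≤ α⁻¹ * ((1 + ε) ^ 2 * ∑ i, ((A.mulVec v i - b i) ^ 2)⁻¹ * (A.mulVec x i) ^ 2) :=
      mul_le_mul_of_nonneg_left h1 (inv_nonneg.2 hα.le)
    have ha2 : η⁻¹ * (x ⬝ᵥ x) ≤ η⁻¹ * ((1 + ε) ^ 2 * (x ⬝ᵥ x)) :=
      mul_le_mul_of_nonneg_left h2 (inv_nonneg.2 hη.le)
    calc α⁻¹ * (∑ i, ((A.mulVec u i - b i) ^ 2)⁻¹ * (A.mulVec x i) ^ 2) + η⁻¹ * (x ⬝ᵥ x)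
        ≤ α⁻¹ * ((1 + ε) ^ 2 * ∑ i, ((A.mulVec v i - b i) ^ 2)⁻¹ * (A.mulVec x i) ^ 2)
          + η⁻¹ * ((1 + ε) ^ 2 * (x ⬝ᵥ x)) := add_le_add ha1 ha2
      _ = (1 + ε) ^ 2 * (α⁻¹ * (∑ i, ((A.mulVec v i - b i) ^ 2)⁻¹ * (A.mulVec x i) ^ 2)
          + η⁻¹ * (x ⬝ᵥ x)) := by ring
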